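/- For probability measures μ and ν on ℝ with finite first moments, the 1-Wasserstein distance equals the L¹ distance between the CDFs: W₁(μ, ν) = ∫_ℝ |F_μ(t) - F_ν(t)| dt. -/

import Mathlib

open MeasureTheory

def IsCoupling (π : Measure (ℝ × ℝ)) (μ ν : Measure ℝ) : Prop :=
  IsProbabilityMeasure π ∧ π.map Prod.fst = μ ∧ π.map Prod.snd = ν

namespace W1Proof

open Set ProbabilityTheory Filter Topology
open scoped ENNReal

noncomputable def Q (μ : Measure ℝ) (u : ℝ) : ℝ := sInf {x | u ≤ cdf μ x}

variable {μ ν : Measure ℝ}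

lemma Su_nonempty (μ : Measure ℝ) {u : ℝ} (hu : u < 1) : {x | u ≤ cdf μ x}.Nonempty := by
  have h := tendsto_cdf_atTop μ
  have : ∀ᶠ x in atTop, cdf μ x ∈ Ioi u := h (Ioi_mem_nhds hu)
  rcases this.exists with ⟨x, hx⟩
  exact ⟨x, show u ≤ cdf μ x from (mem_Ioi.mp hx).le⟩

lemma Su_bddBelow (μ : Measure ℝ) {u : ℝ} (hu : 0 < u) : BddBelow {x | u ≤ cdf μ x} := by
  have h := tendsto_cdf_atBot μ
  have : ∀ᶠ x in atBot, cdf μ x ∈ Iio u := h (Iio_mem_nhds hu)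
  rcases this.exists with ⟨x₀, hx₀⟩
  refine ⟨x₀, fun x hx => ?_⟩
  by_contra hlt
  push_neg at hlt
  exact absurd (le_trans hx (monotone_cdf μ hlt.le)) (not_le.2 hx₀)

lemma le_cdf_Q (μ : Measure ℝ) {u : ℝ} (hu0 : 0 < u) (hu1 : u < 1) : u ≤ cdf μ (Q μ u) := by
  have hne := Su_nonempty μ hu1
  have hbdd := Su_bddBelow μ hu0
  have h1 : ∀ x ∈ Ioi (Q μ u), u ≤ cdf μ x := by
    intro x hx
    rcases exists_lt_of_csInf_lt hne hx with ⟨y, hy, hyx⟩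
    exact le_trans hy (monotone_cdf μ hyx.le)
  have h2 : Tendsto (cdf μ) (𝓝[>] (Q μ u)) (𝓝 (cdf μ (Q μ u))) := by
    have := (cdf μ).right_continuous (Q μ u)
    exact this.mono_left (nhdsWithin_mono _ Ioi_subset_Ici_self)
  exact ge_of_tendsto h2 (eventually_nhdsWithin_of_forall h1)

lemma Q_le_iff (μ : Measure ℝ) {u x : ℝ} (hu0 : 0 < u) (hu1 : u < 1) :
    Q μ u ≤ x ↔ u ≤ cdf μ x := by
  constructor
  · intro h
    exact le_trans (le_cdf_Q μ hu0 hu1) (monotone_cdf μ h)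
  · intro h
    exact csInf_le (Su_bddBelow μ hu0) h

noncomputable def g (μ : Measure ℝ) (u : ℝ) : ℝ := if u ∈ Ioo (0:ℝ) 1 then Q μ u else 0

lemma g_le_iff {u x : ℝ} (hu : u ∈ Ioo (0:ℝ) 1) : g μ u ≤ x ↔ u ≤ cdf μ x := by
  rw [g, if_pos hu]
  exact Q_le_iff μ hu.1 hu.2

lemma measurable_g (μ : Measure ℝ) : Measurable (g μ) := by
  apply measurable_of_Iic
  intro x
  have h : g μ ⁻¹' Iic x
      = (Ioo (0:ℝ) 1 ∩ Iic (cdf μ x)) ∪ ((Ioo (0:ℝ) 1)ᶜ ∩ {u : ℝ | (0:ℝ) ≤ x}) := by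
    ext u
    simp only [mem_preimage, mem_Iic, mem_union, mem_inter_iff, mem_compl_iff, mem_setOf_eq]
    by_cases hu : u ∈ Ioo (0:ℝ) 1
    · rw [g_le_iff hu]
      simp [hu, mem_Iic]
    · simp [g, hu]
  rw [h]
  exact (measurableSet_Ioo.inter measurableSet_Iic).union
    (measurableSet_Ioo.compl.inter (MeasurableSet.const _))

noncomputable def P : Measure ℝ := volume.restrict (Ioo (0:ℝ) 1)

instance : IsProbabilityMeasure P := by
  constructor
  rw [P, Measure.restrict_apply_univ, Real.volume_Ioo]
  norm_num

lemma vol_Ioo_inter_Iic {a : ℝ} (h0 : 0 ≤ a) (h1 : a ≤ 1) :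
    volume (Ioo (0:ℝ) 1 ∩ Iic a) = ENNReal.ofReal a := by
  rcases eq_or_lt_of_le h1 with rfl | h
  · have hsub : Ioo (0:ℝ) 1 ⊆ Iic 1 := fun u hu => le_of_lt hu.2
    rw [inter_eq_left.mpr hsub, Real.volume_Ioo]
    norm_num
  · have : Ioo (0:ℝ) 1 ∩ Iic a = Ioc 0 a := by
      ext u
      constructor
      · rintro ⟨⟨h1', _⟩, h3⟩; exact ⟨h1', h3⟩
      · rintro ⟨h1', h2'⟩; exact ⟨⟨h1', lt_of_le_of_lt h2' h⟩, h2'⟩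
    rw [this, Real.volume_Ioc, sub_zero]

lemma vol_Ioc_inter_Ioo {a b : ℝ} (h0 : 0 ≤ a) (hab : a ≤ b) (h1 : b ≤ 1) :
    volume (Ioc a b ∩ Ioo 0 1) = ENNReal.ofReal (b - a) := by
  rcases eq_or_lt_of_le h1 with rfl | h
  · have : Ioc a 1 ∩ Ioo (0:ℝ) 1 = Ioo a 1 := by
      ext u
      constructor
      · rintro ⟨⟨hu1, _⟩, _, hu2⟩; exact ⟨hu1, hu2⟩
      · rintro ⟨hu1, hu2⟩; exact ⟨⟨hu1, hu2.le⟩, lt_of_le_of_lt h0 hu1, hu2⟩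
    rw [this, Real.volume_Ioo]
  · have : Ioc a b ∩ Ioo (0:ℝ) 1 = Ioc a b := by
      refine inter_eq_left.mpr fun u hu => ⟨lt_of_le_of_lt h0 hu.1, lt_of_le_of_lt hu.2 h⟩
    rw [this, Real.volume_Ioc]

lemma map_g (μ : Measure ℝ) [IsProbabilityMeasure μ] : P.map (g μ) = μ := by
  have hg := measurable_g μ
  haveI : IsProbabilityMeasure (P.map (g μ)) := Measure.isProbabilityMeasure_map hg.aemeasurable
  refine Measure.ext_of_Iic (P.map (g μ)) μ fun x => ?_
  rw [Measure.map_apply hg measurableSet_Iic, P, Measure.restrict_apply (hg measurableSet_Iic)]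
  have h : g μ ⁻¹' Iic x ∩ Ioo 0 1 = Ioo (0:ℝ) 1 ∩ Iic (cdf μ x) := by
    ext u
    simp only [mem_inter_iff, mem_preimage, mem_Iic]
    constructor
    · rintro ⟨h1, h2⟩; exact ⟨h2, (g_le_iff h2).mp h1⟩
    · rintro ⟨h1, h2⟩; exact ⟨(g_le_iff h1).mpr h2, h1⟩
  rw [h, vol_Ioo_inter_Iic (cdf_nonneg μ x) (cdf_le_one μ x), ofReal_cdf μ x]

/-- The symmetric-difference set at level `t`. -/
def S (t : ℝ) : Set (ℝ × ℝ) := {p | min p.1 p.2 ≤ t ∧ t < max p.1 p.2}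

lemma measurableSet_S (t : ℝ) : MeasurableSet (S t) :=
  (measurableSet_le (measurable_fst.min measurable_snd) measurable_const).inter
    (measurableSet_lt measurable_const (measurable_fst.max measurable_snd))

lemma mem_S_iff {t : ℝ} {p : ℝ × ℝ} : p ∈ S t ↔ ((p.1 ≤ t) ↔ ¬ (p.2 ≤ t)) := by
  simp only [S, mem_setOf_eq, min_le_iff, lt_max_iff]
  simp only [← not_le]
  tauto

lemma xor_le_iff (a b u : ℝ) : ((u ≤ a) ↔ ¬ (u ≤ b)) ↔ u ∈ Ioc (min a b) (max a b) := by
  simp only [mem_Ioc, min_lt_iff, le_max_iff]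
  simp only [← not_le]
  tauto

/-- Core identity: cost of a measure as an integral of symmetric differences. -/
lemma lintegral_cost (π : Measure (ℝ × ℝ)) [IsProbabilityMeasure π] :
    ∫⁻ p, ENNReal.ofReal |p.1 - p.2| ∂π = ∫⁻ t, π (S t) := by
  classical
  set T : Set ((ℝ × ℝ) × ℝ) := {q | q.1 ∈ S q.2} with hT
  have hTm : MeasurableSet T := by
    have : T = {q : (ℝ × ℝ) × ℝ | min q.1.1 q.1.2 ≤ q.2 ∧ q.2 < max q.1.1 q.1.2} := rfl
    rw [this]
    exact (measurableSet_le ((measurable_fst.comp measurable_fst).min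
        (measurable_snd.comp measurable_fst)) measurable_snd).inter
      (measurableSet_lt measurable_snd ((measurable_fst.comp measurable_fst).max
        (measurable_snd.comp measurable_fst)))
  set f : ℝ × ℝ → ℝ → ℝ≥0∞ := fun p t => T.indicator (fun _ => (1:ℝ≥0∞)) (p, t) with hf
  have hpoint : ∀ p : ℝ × ℝ, ∫⁻ t, f p t = ENNReal.ofReal |p.1 - p.2| := by
    intro p
    have hset : (fun t => f p t) = (Ico (min p.1 p.2) (max p.1 p.2)).indicator
        (fun _ => (1:ℝ≥0∞)) := by
      funext t
      simp only [hf, indicator_apply, hT, mem_setOf_eq, S, mem_Ico]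
    rw [hset, lintegral_indicator measurableSet_Ico, setLIntegral_one, Real.volume_Ico,
      max_sub_min_eq_abs, abs_sub_comm]
  have hswap : ∫⁻ p, ∫⁻ t, f p t ∂volume ∂π = ∫⁻ t, ∫⁻ p, f p t ∂π ∂volume := by
    apply lintegral_lintegral_swap
    exact (measurable_indicator_const_iff 1 |>.mpr hTm).aemeasurable
  have hinner : ∀ t : ℝ, ∫⁻ p, f p t ∂π = π (S t) := by
    intro t
    have : (fun p => f p t) = (S t).indicator (fun _ => (1:ℝ≥0∞)) := by
      funext p
      simp only [hf, indicator_apply, hT, mem_setOf_eq]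
    rw [this, lintegral_indicator (measurableSet_S t)]
    simp
  calc ∫⁻ p, ENNReal.ofReal |p.1 - p.2| ∂π
      = ∫⁻ p, ∫⁻ t, f p t ∂volume ∂π := by
        refine lintegral_congr fun p => (hpoint p).symm
    _ = ∫⁻ t, ∫⁻ p, f p t ∂π ∂volume := hswap
    _ = ∫⁻ t, π (S t) := lintegral_congr fun t => hinner t

lemma cost_lt_top (π : Measure (ℝ × ℝ)) (hc : IsCoupling π μ ν)
    (hμ : Integrable id μ) (hν : Integrable id ν) :
    ∫⁻ p, ENNReal.ofReal |p.1 - p.2| ∂π < ⊤ := by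
  have h1 : ∫⁻ p : ℝ × ℝ, ENNReal.ofReal |p.1 - p.2| ∂π
      ≤ ∫⁻ p : ℝ × ℝ, (ENNReal.ofReal |p.1| + ENNReal.ofReal |p.2|) ∂π := by
    refine lintegral_mono fun p => ?_
    rw [← ENNReal.ofReal_add (abs_nonneg _) (abs_nonneg _)]
    exact ENNReal.ofReal_le_ofReal (abs_sub p.1 p.2)
  have h2 : ∫⁻ p : ℝ × ℝ, ENNReal.ofReal |p.1| ∂π = ∫⁻ x, ENNReal.ofReal |x| ∂μ := by
    rw [← hc.2.1, lintegral_map (measurable_abs.ennreal_ofReal) measurable_fst]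
  have h3 : ∫⁻ p : ℝ × ℝ, ENNReal.ofReal |p.2| ∂π = ∫⁻ x, ENNReal.ofReal |x| ∂ν := by
    rw [← hc.2.2, lintegral_map (measurable_abs.ennreal_ofReal) measurable_snd]
  have h4 : ∫⁻ x, ENNReal.ofReal |x| ∂μ < ⊤ := by
    have := hμ.hasFiniteIntegral
    simpa [HasFiniteIntegral, Real.enorm_eq_ofReal_abs] using this
  have h5 : ∫⁻ x, ENNReal.ofReal |x| ∂ν < ⊤ := by
    have := hν.hasFiniteIntegral
    simpa [HasFiniteIntegral, Real.enorm_eq_ofReal_abs] using this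
  calc ∫⁻ p : ℝ × ℝ, ENNReal.ofReal |p.1 - p.2| ∂π
      ≤ ∫⁻ p : ℝ × ℝ, (ENNReal.ofReal |p.1| + ENNReal.ofReal |p.2|) ∂π := h1
    _ = (∫⁻ p : ℝ × ℝ, ENNReal.ofReal |p.1| ∂π) + ∫⁻ p : ℝ × ℝ, ENNReal.ofReal |p.2| ∂π := by
        rw [lintegral_add_left]
        exact (measurable_abs.ennreal_ofReal).comp measurable_fst
    _ < ⊤ := by rw [h2, h3]; exact ENNReal.add_lt_top.mpr ⟨h4, h5⟩

lemma S_measure_ge (π : Measure (ℝ × ℝ)) [IsProbabilityMeasure μ] [IsProbabilityMeasure ν]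
    (hc : IsCoupling π μ ν) (t : ℝ) :
    ENNReal.ofReal |cdf μ t - cdf ν t| ≤ π (S t) := by
  set A : Set (ℝ × ℝ) := {p | p.1 ≤ t} with hA
  set B : Set (ℝ × ℝ) := {p | p.2 ≤ t} with hB
  have hπA : π A = ENNReal.ofReal (cdf μ t) := by
    have hA' : A = Prod.fst ⁻¹' Iic t := rfl
    rw [hA', ← Measure.map_apply measurable_fst measurableSet_Iic, hc.2.1, ofReal_cdf]
  have hπB : π B = ENNReal.ofReal (cdf ν t) := by
    have hB' : B = Prod.snd ⁻¹' Iic t := rfl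
    rw [hB', ← Measure.map_apply measurable_snd measurableSet_Iic, hc.2.2, ofReal_cdf]
  have hAB : A \ B ⊆ S t := by
    rintro p ⟨h1, h2⟩
    rw [mem_S_iff]
    simp only [hA, hB, mem_setOf_eq] at h1 h2
    tauto
  have hBA : B \ A ⊆ S t := by
    rintro p ⟨h1, h2⟩
    rw [mem_S_iff]
    simp only [hA, hB, mem_setOf_eq] at h1 h2
    tauto
  have key : ∀ (C D : Set (ℝ × ℝ)), C \ D ⊆ S t → π C - π D ≤ π (S t) := by
    intro C D hCD
    rw [tsub_le_iff_right]
    calc π C ≤ π (C \ D ∪ D) := measure_mono (subset_diff_union C D)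
      _ ≤ π (C \ D) + π D := measure_union_le _ _
      _ ≤ π (S t) + π D := add_le_add (measure_mono hCD) le_rfl
  rcases le_total (cdf ν t) (cdf μ t) with h | h
  · rw [abs_of_nonneg (by linarith), ENNReal.ofReal_sub _ (cdf_nonneg ν t), ← hπA, ← hπB]
    exact key A B hAB
  · rw [abs_of_nonpos (by linarith), neg_sub, ENNReal.ofReal_sub _ (cdf_nonneg μ t), ← hπA, ← hπB]
    exact key B A hBA

theorem main (μ ν : Measure ℝ) [IsProbabilityMeasure μ] [IsProbabilityMeasure ν]
    (hμ : Integrable id μ) (hν : Integrable id ν) :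
    sInf {r : ℝ | ∃ π : Measure (ℝ × ℝ), IsCoupling π μ ν ∧
        r = ∫ p : ℝ × ℝ, |p.1 - p.2| ∂π}
      = ∫ t : ℝ, |cdf μ t - cdf ν t| := by
  classical
  set Lstar : ℝ≥0∞ := ∫⁻ t, ENNReal.ofReal |cdf μ t - cdf ν t| with hLstar
  have hcost_eq : ∀ (π : Measure (ℝ × ℝ)), IsProbabilityMeasure π →
      ∫ p : ℝ × ℝ, |p.1 - p.2| ∂π = (∫⁻ p, ENNReal.ofReal |p.1 - p.2| ∂π).toReal := by
    intro π hπ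
    exact integral_eq_lintegral_of_nonneg_ae (Eventually.of_forall fun p => abs_nonneg _)
      ((continuous_fst.sub continuous_snd).abs).aestronglyMeasurable
  set π₀ : Measure (ℝ × ℝ) := P.map (fun u => (g μ u, g ν u)) with hπ₀
  have hpair : Measurable fun u => (g μ u, g ν u) := (measurable_g μ).prodMk (measurable_g ν)
  haveI hπ₀prob : IsProbabilityMeasure π₀ := Measure.isProbabilityMeasure_map hpair.aemeasurable
  have hfst : π₀.map Prod.fst = μ := by
    rw [hπ₀, Measure.map_map measurable_fst hpair]
    exact map_g μ
  have hsnd : π₀.map Prod.snd = ν := by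
    rw [hπ₀, Measure.map_map measurable_snd hpair]
    exact map_g ν
  have hc₀ : IsCoupling π₀ μ ν := ⟨hπ₀prob, hfst, hsnd⟩
  have hS₀ : ∀ t, π₀ (S t) = ENNReal.ofReal |cdf μ t - cdf ν t| := by
    intro t
    rw [hπ₀, Measure.map_apply hpair (measurableSet_S t), P,
      Measure.restrict_apply (hpair (measurableSet_S t))]
    have hset : (fun u => (g μ u, g ν u)) ⁻¹' S t ∩ Ioo 0 1
        = Ioc (min (cdf μ t) (cdf ν t)) (max (cdf μ t) (cdf ν t)) ∩ Ioo 0 1 := by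
      ext u
      by_cases hu : u ∈ Ioo (0:ℝ) 1
      · simp only [mem_inter_iff, mem_preimage, hu, and_true]
        rw [mem_S_iff]
        show ((g μ u ≤ t) ↔ ¬ (g ν u ≤ t)) ↔ _
        rw [g_le_iff hu, g_le_iff hu, xor_le_iff]
      · simp [hu]
    rw [hset, vol_Ioc_inter_Ioo (le_min (cdf_nonneg μ t) (cdf_nonneg ν t)) min_le_max
      (max_le (cdf_le_one μ t) (cdf_le_one ν t)), max_sub_min_eq_abs, abs_sub_comm]
  have hcost₀ : ∫⁻ p, ENNReal.ofReal |p.1 - p.2| ∂π₀ = Lstar := by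
    rw [hLstar]
    rw [lintegral_cost π₀]
    exact lintegral_congr hS₀
  have hLstar_top : Lstar ≠ ⊤ := by
    rw [← hcost₀]; exact (cost_lt_top π₀ hc₀ hμ hν).ne
  have hRHS : ∫ t : ℝ, |cdf μ t - cdf ν t| = Lstar.toReal := by
    rw [integral_eq_lintegral_of_nonneg_ae (f := fun t => |cdf μ t - cdf ν t|)
      (Eventually.of_forall fun t => abs_nonneg _)
      ((((monotone_cdf μ).measurable.sub (monotone_cdf ν).measurable).abs.aestronglyMeasurable :
        AEStronglyMeasurable (fun t => |cdf μ t - cdf ν t|) volume))]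
  have hmem : (∫ t : ℝ, |cdf μ t - cdf ν t|) ∈ {r : ℝ | ∃ π : Measure (ℝ × ℝ),
      IsCoupling π μ ν ∧ r = ∫ p : ℝ × ℝ, |p.1 - p.2| ∂π} := by
    refine ⟨π₀, hc₀, ?_⟩
    rw [hRHS, hcost_eq π₀ hπ₀prob, hcost₀]
  have hlb : ∀ r ∈ {r : ℝ | ∃ π : Measure (ℝ × ℝ),
      IsCoupling π μ ν ∧ r = ∫ p : ℝ × ℝ, |p.1 - p.2| ∂π},
      (∫ t : ℝ, |cdf μ t - cdf ν t|) ≤ r := by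
    rintro r ⟨π, hc, rfl⟩
    rw [hcost_eq π hc.1, hRHS]
    refine ENNReal.toReal_mono (cost_lt_top π hc hμ hν).ne ?_
    rw [hLstar]
    haveI := hc.1
    rw [lintegral_cost π]
    exact lintegral_mono fun t => S_measure_ge π hc t
  refine le_antisymm (csInf_le ⟨0, fun r hr => ?_⟩ hmem) (le_csInf ⟨_, hmem⟩ hlb)
  obtain ⟨π, hcπ, rfl⟩ := hr
  exact integral_nonneg fun p => abs_nonneg _

end W1Proof

theorem wasserstein1_eq_integral_abs_cdf_sub
    (μ ν : Measure ℝ) [IsProbabilityMeasure μ] [IsProbabilityMeasure ν]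
    (hμ : Integrable id μ) (hν : Integrable id ν) :
    sInf {r : ℝ | ∃ π : Measure (ℝ × ℝ), IsCoupling π μ ν ∧
        r = ∫ p : ℝ × ℝ, |p.1 - p.2| ∂π}
      = ∫ t : ℝ, |ProbabilityTheory.cdf μ t - ProbabilityTheory.cdf ν t| := by
  exact W1Proof.main μ ν hμ hν
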